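/- Let D ∈ ℂ[X] with deg D = 2n for some n ≥ 1, and let (p, q) be a nontrivial solution of the Pell equation for D. Then deg p = deg q + n, the polynomial U := p′/q has degree n − 1, and the leading coefficients satisfy lc(p)² = lc(q)²·lc(D). In particular, if D is monic then the leading coefficient of U equals deg p or −deg p; in particular it is a nonzero real number. -/
import Mathlib


open Polynomial

/-- If `deg D = 2n` (`n ≥ 1`) and `(p, q)` is a nontrivial
solution of the Pell equation for `D`, then `deg p = deg q + n`, the
polynomial `U = p′/q` has degree `n - 1`, and `lc(p)² = lc(q)²·lc(D)`;
if moreover `D` is monic then the leading coefficient of `U` is `± deg p`,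
in particular a nonzero real number. -/
theorem pell_degree_and_leading_coeff (n : ℕ) (hn : 1 ≤ n) (D p q : Polynomial ℂ)
    (hD : D.natDegree = 2 * n)
    (hpq : p ^ 2 - q ^ 2 * D = 1) (hq : q ≠ 0) :
    p.natDegree = q.natDegree + n ∧
    p.leadingCoeff ^ 2 = q.leadingCoeff ^ 2 * D.leadingCoeff ∧
    ∃ U : Polynomial ℂ, derivative p = q * U ∧
      U.degree = ((n - 1 : ℕ) : WithBot ℕ) ∧
      (D.Monic →
        (U.leadingCoeff = (p.natDegree : ℂ) ∨
          U.leadingCoeff = -(p.natDegree : ℂ))) := by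
  have hD0 : D ≠ 0 := by
    intro h; rw [h, natDegree_zero] at hD; omega
  have hq2 : q ^ 2 ≠ 0 := pow_ne_zero _ hq
  have hqD0 : q ^ 2 * D ≠ 0 := mul_ne_zero hq2 hD0
  have hndqD : (q ^ 2 * D).natDegree = 2 * q.natDegree + 2 * n := by
    rw [natDegree_mul hq2 hD0, natDegree_pow, hD]
  have hp2 : p ^ 2 = 1 + q ^ 2 * D := by linear_combination hpq
  -- degree statement
  have hnd1 : ((1 : ℂ[X]) + q ^ 2 * D).natDegree = 2 * q.natDegree + 2 * n := by
    rw [natDegree_add_eq_right_of_natDegree_lt, hndqD]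
    rw [natDegree_one, hndqD]; omega
  have hdeg : p.natDegree = q.natDegree + n := by
    have := congrArg natDegree hp2
    rw [natDegree_pow, hnd1] at this
    omega
  have hp0 : p ≠ 0 := by
    intro h; rw [h, natDegree_zero] at hdeg; omega
  -- leading coefficient statement
  have hlc : p.leadingCoeff ^ 2 = q.leadingCoeff ^ 2 * D.leadingCoeff := by
    have h1 : ((1 : ℂ[X]) + q ^ 2 * D).leadingCoeff = (q ^ 2 * D).leadingCoeff := by
      apply leadingCoeff_add_of_degree_lt
      rw [degree_one, degree_eq_natDegree hqD0, hndqD]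
      exact_mod_cast by omega
    have := congrArg leadingCoeff hp2
    rw [h1, leadingCoeff_pow, leadingCoeff_mul, leadingCoeff_pow] at this
    exact this
  refine ⟨hdeg, hlc, ?_⟩
  -- derivative divisibility
  have hcop : IsCoprime q p := ⟨-(q * D), p, by linear_combination hpq⟩
  have key : 2 * p * derivative p = q * (2 * derivative q * D + q * derivative D) := by
    have h := congrArg derivative hpq
    simp only [derivative_sub, derivative_mul, derivative_pow, derivative_one,
      C_eq_natCast, Nat.cast_ofNat, map_ofNat, pow_one] at h
    linear_combination h
  have hdvd2 : q ∣ 2 * p * derivative p := Dvd.intro _ key.symm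
  have hdvd1 : q ∣ p * derivative p := by
    have h21 : C (2⁻¹ : ℂ) * 2 = (1 : ℂ[X]) := by
      rw [show (2 : ℂ[X]) = C 2 from (map_ofNat C 2).symm, ← C_mul]
      norm_num
    have h3 : C (2⁻¹ : ℂ) * (2 * p * derivative p) = p * derivative p := by
      calc C (2⁻¹ : ℂ) * (2 * p * derivative p)
          = C (2⁻¹ : ℂ) * 2 * (p * derivative p) := by ring
        _ = p * derivative p := by rw [h21, one_mul]
    rw [← h3]; exact Dvd.dvd.mul_left hdvd2 _
  have hdvd : q ∣ derivative p := hcop.dvd_of_dvd_mul_left hdvd1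
  obtain ⟨U, hU⟩ := hdvd
  refine ⟨U, hU, ?_⟩
  -- degree and leading coeff of derivative p
  have hndp : p.natDegree ≠ 0 := by omega
  have hlcp' : (derivative p).coeff (p.natDegree - 1) = p.leadingCoeff * p.natDegree := by
    have hc : ((p.natDegree - 1 : ℕ) : ℂ) + 1 = (p.natDegree : ℂ) := by
      rw [Nat.cast_sub (by omega : 1 ≤ p.natDegree)]; ring
    rw [coeff_derivative, Nat.sub_add_cancel (by omega : 1 ≤ p.natDegree), hc, leadingCoeff]
  have hlcp'0 : (derivative p).coeff (p.natDegree - 1) ≠ 0 := by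
    rw [hlcp']
    exact mul_ne_zero (leadingCoeff_ne_zero.2 hp0) (Nat.cast_ne_zero.2 hndp)
  have hle : p.natDegree - 1 ≤ (derivative p).natDegree := le_natDegree_of_ne_zero hlcp'0
  have hlt : (derivative p).natDegree < p.natDegree := natDegree_derivative_lt hndp
  have hndp' : (derivative p).natDegree = p.natDegree - 1 := by omega
  have hp'0 : derivative p ≠ 0 := fun h => hlcp'0 (by rw [h, coeff_zero])
  have hU0 : U ≠ 0 := by
    rintro rfl; rw [mul_zero] at hU; exact hp'0 hU
  have hndU : U.natDegree = n - 1 := by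
    have := congrArg natDegree hU
    rw [natDegree_mul hq hU0, hndp'] at this
    omega
  refine ⟨by rw [degree_eq_natDegree hU0, hndU], ?_⟩
  -- leading coefficient of U
  have hlcder : (derivative p).leadingCoeff = p.leadingCoeff * p.natDegree := by
    rw [leadingCoeff, hndp', hlcp']
  have hlcU : q.leadingCoeff * U.leadingCoeff = p.leadingCoeff * p.natDegree := by
    rw [← leadingCoeff_mul, ← hU, hlcder]
  intro hmon
  have hsq : p.leadingCoeff ^ 2 = q.leadingCoeff ^ 2 := by
    rw [hlc, hmon.leadingCoeff, mul_one]
  have hpm : p.leadingCoeff = q.leadingCoeff ∨ p.leadingCoeff = -q.leadingCoeff := by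
    have : (p.leadingCoeff - q.leadingCoeff) * (p.leadingCoeff + q.leadingCoeff) = 0 := by
      linear_combination hsq
    rcases mul_eq_zero.1 this with h | h
    · exact Or.inl (sub_eq_zero.1 h)
    · exact Or.inr (eq_neg_of_add_eq_zero_left h)
  have hlcq0 : q.leadingCoeff ≠ 0 := leadingCoeff_ne_zero.2 hq
  rcases hpm with h | h
  · left
    apply mul_left_cancel₀ hlcq0
    rw [hlcU, h]
  · right
    apply mul_left_cancel₀ hlcq0
    rw [hlcU, h]; ring
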